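/- Suppose c_a·‖g(u) − g(v)‖ ≤ ‖u − v‖ ≤ c_b·‖g(u) − g(v)‖ for all u, v ∈ E, and suppose c_0·T^p ≤ Σ_{t=1}^T ‖g(s_t) − g(s_d)‖. If c_a·c_0·T^{p−1} ≥ 2·c_b·Δ, where Δ = ‖g(s_d) − g(s_o)‖, then (1/T)·Σ_{t=1}^T ‖s_t − s_o‖ ≥ (c_b·Δ + c_a·c_0·T^{p−1})/4. -/
import Mathlib


open Real

theorem stmt12 {E F : Type*} [NormedAddCommGroup E] [NormedSpace ℝ E]
    [NormedAddCommGroup F] [NormedSpace ℝ F]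
    (g : E → F) (ca cb c0 p : ℝ) (hca : 0 < ca) (hcb : 0 < cb) (hc0 : 0 < c0)
    (hp0 : 0 < p) (hp1 : p < 1)
    (T : ℕ) (hT : 0 < T) (s : Fin T → E) (so sd : E)
    (hlow : ∀ u v : E, ca * ‖g u - g v‖ ≤ ‖u - v‖)
    (hupp : ∀ u v : E, ‖u - v‖ ≤ cb * ‖g u - g v‖)
    (hreg : c0 * (T : ℝ) ^ p ≤ ∑ t, ‖g (s t) - g sd‖)
    (hbig : ca * c0 * (T : ℝ) ^ (p - 1) ≥ 2 * cb * ‖g sd - g so‖) :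
    (1 / (T : ℝ)) * ∑ t, ‖s t - so‖ ≥
      (cb * ‖g sd - g so‖ + ca * c0 * (T : ℝ) ^ (p - 1)) / 4 := by
  set Δ := ‖g sd - g so‖ with hΔ
  have hTr : (0 : ℝ) < (T : ℝ) := by exact_mod_cast hT
  have hΔ0 : 0 ≤ Δ := norm_nonneg _
  -- ca * Δ ≤ cb * Δ
  have hcacb : ca * Δ ≤ cb * Δ := by
    have h1 := hlow sd so
    have h2 := hupp sd so
    linarith
  -- pointwise bound
  have hpt : ∀ t : Fin T, ca * ‖g (s t) - g sd‖ - ca * Δ ≤ ‖s t - so‖ := by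
    intro t
    have h1 := hlow (s t) so
    have htri : ‖g (s t) - g sd‖ ≤ ‖g (s t) - g so‖ + ‖g so - g sd‖ :=
      norm_sub_le_norm_sub_add_norm_sub _ _ _
    have hrev : ‖g so - g sd‖ = Δ := by rw [hΔ, norm_sub_rev]
    nlinarith [norm_nonneg (g (s t) - g so)]
  have hsum : ca * (∑ t, ‖g (s t) - g sd‖) - (T : ℝ) * (ca * Δ) ≤ ∑ t, ‖s t - so‖ := by
    calc ca * (∑ t, ‖g (s t) - g sd‖) - (T : ℝ) * (ca * Δ)
        = ∑ t : Fin T, (ca * ‖g (s t) - g sd‖ - ca * Δ) := by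
          rw [Finset.sum_sub_distrib, ← Finset.mul_sum]
          simp
      _ ≤ ∑ t, ‖s t - so‖ := Finset.sum_le_sum fun t _ => hpt t
  have hpow : (T : ℝ) ^ p = (T : ℝ) ^ (p - 1) * (T : ℝ) := by
    rw [← Real.rpow_add_one (ne_of_gt hTr)]
    ring_nf
  have hsum2 : (T : ℝ) * (ca * c0 * (T : ℝ) ^ (p - 1)) - (T : ℝ) * (ca * Δ)
      ≤ ∑ t, ‖s t - so‖ := by
    have : ca * (c0 * (T : ℝ) ^ p) ≤ ca * (∑ t, ‖g (s t) - g sd‖) :=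
      mul_le_mul_of_nonneg_left hreg hca.le
    rw [hpow] at this
    nlinarith
  rw [ge_iff_le, div_le_iff₀ (by norm_num : (0:ℝ) < 4), one_div, ← div_eq_inv_mul,
    div_mul_eq_mul_div, le_div_iff₀ hTr]
  have hA : 0 < ca * c0 * (T : ℝ) ^ (p - 1) :=
    mul_pos (mul_pos hca hc0) (Real.rpow_pos_of_pos hTr _)
  nlinarith [mul_le_mul_of_nonneg_left hcacb hTr.le, mul_le_mul_of_nonneg_left hbig hTr.le,
    mul_pos hTr hA]
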